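/- Let Ω ∈ RS(M) and let a ∈ (−1,1) with a ≠ 0. If Ω((z + a)/(1 + za)) = Ω(z) holds for all z ∈ Z := ℂ ∖ ((−∞,−1] ∪ [1,+∞)), then Ω is a constant function; i.e. the only fixed points of the transformation Ω(z) ↦ Ω((z + a)/(1 + za)) of RS(M) are the constant functions. -/

import Mathlib

open Complex ContinuousLinearMap
open scoped ComplexConjugate

noncomputable section

variable {M : Type*} [NormedAddCommGroup M] [InnerProductSpace ℂ M] [CompleteSpace M]
  [TopologicalSpace.SeparableSpace M]

/-- The domain `Z = ℂ ∖ ((−∞,−1] ∪ [1,+∞))`. -/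
def Zdom : Set ℂ := {z : ℂ | z ∉ (fun x : ℝ => (x : ℂ)) '' (Set.Iic (-1) ∪ Set.Ici 1)}

/-- The combined Nevanlinna–Schur class `RS(M)`. -/
def IsRS (Ω : ℂ → (M →L[ℂ] M)) : Prop :=
  DifferentiableOn ℂ Ω Zdom ∧
  (∀ z ∈ Zdom, Ω (starRingEnd ℂ z) = adjoint (Ω z)) ∧
  (∀ z ∈ Zdom, z.im ≠ 0 → ∀ f : M, 0 ≤ z.im * (inner ℂ f (Ω z f) : ℂ).im) ∧
  (∀ x : ℝ, -1 < x → x < 1 →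
    ((1 : M →L[ℂ] M) - Ω (x : ℂ)).IsPositive ∧ ((1 : M →L[ℂ] M) + Ω (x : ℂ)).IsPositive)

lemma mem_Zdom_iff {z : ℂ} : z ∈ Zdom ↔ z.im ≠ 0 ∨ (-1 < z.re ∧ z.re < 1) := by
  unfold Zdom
  simp only [Set.mem_setOf_eq, Set.mem_image, Set.mem_union, Set.mem_Iic, Set.mem_Ici, not_exists]
  constructor
  · intro h
    by_cases him : z.im = 0
    · refine Or.inr ?_
      by_contra hc
      push_neg at hc
      rcases le_or_gt z.re (-1) with h1 | h1
      · exact h z.re ⟨Or.inl h1, Complex.ext rfl him.symm⟩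
      · exact h z.re ⟨Or.inr (hc h1), Complex.ext rfl him.symm⟩
    · exact Or.inl him
  · rintro (him | ⟨h1, h2⟩) x ⟨hx, hxz⟩
    · apply him; rw [← hxz]; simp
    · have hxe : x = z.re := by rw [← hxz]; simp
      rcases hx with hx | hx
      · linarith [hxe ▸ hx]
      · linarith [hxe ▸ hx]

lemma zdom_isOpen : IsOpen Zdom := by
  have : IsClosed ((fun x : ℝ => (x : ℂ)) '' (Set.Iic (-1) ∪ Set.Ici 1)) :=
    (Complex.isometry_ofReal.isClosedEmbedding.isClosedMap) _
      ((isClosed_Iic).union isClosed_Ici)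
  exact this.isOpen_compl

lemma zdom_star : StarConvex ℝ (0 : ℂ) Zdom := by
  intro y hy t s ht hs hts
  rw [smul_zero, zero_add]
  rw [mem_Zdom_iff] at hy ⊢
  have hs1 : s ≤ 1 := by linarith
  rcases hy with him | ⟨h1, h2⟩
  · by_cases hs0 : s = 0
    · subst hs0; right; norm_num
    · left
      simp only [Complex.smul_im, smul_eq_mul]
      exact mul_ne_zero hs0 him
  · right
    simp only [Complex.smul_re, smul_eq_mul]
    constructor <;> nlinarith

lemma zdom_preconnected : IsPreconnected Zdom := by
  apply isPreconnected_of_forall (0 : ℂ)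
  intro y hy
  exact ⟨segment ℝ 0 y, zdom_star.segment_subset hy, left_mem_segment _ _ _,
    right_mem_segment _ _ _, (convex_segment _ _).isPreconnected⟩

lemma ofReal_mem_Zdom {x : ℝ} (h1 : -1 < x) (h2 : x < 1) : (x : ℂ) ∈ Zdom := by
  rw [mem_Zdom_iff]; right; simpa using ⟨h1, h2⟩

lemma nonreal_mem_Zdom {z : ℂ} (h : z.im ≠ 0) : z ∈ Zdom := mem_Zdom_iff.mpr (Or.inl h)

section Waux

def Wmap (a x : ℝ) : ℝ := (x + a) / (1 + x * a)

def ucoord (x : ℝ) : ℝ := Real.log ((1 + x) / (1 - x))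

variable {a : ℝ}

lemma denom_pos {x : ℝ} (ha : a ∈ Set.Ioo (-1:ℝ) 1) (hx : x ∈ Set.Ioo (-1:ℝ) 1) :
    0 < 1 + x * a := by
  obtain ⟨h1, h2⟩ := ha; obtain ⟨h3, h4⟩ := hx; nlinarith

lemma Wmap_mem (ha : a ∈ Set.Ioo (-1:ℝ) 1) {x : ℝ} (hx : x ∈ Set.Ioo (-1:ℝ) 1) :
    Wmap a x ∈ Set.Ioo (-1:ℝ) 1 := by
  have hd := denom_pos ha hx
  obtain ⟨h1, h2⟩ := ha; obtain ⟨h3, h4⟩ := hx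
  constructor
  · rw [Wmap, lt_div_iff₀ hd]; nlinarith
  · rw [Wmap, div_lt_iff₀ hd]; nlinarith

lemma ucoord_strictMono : StrictMonoOn ucoord (Set.Ioo (-1:ℝ) 1) := by
  intro x hx y hy hxy
  obtain ⟨h1, h2⟩ := hx; obtain ⟨h3, h4⟩ := hy
  apply Real.log_lt_log (div_pos (by linarith) (by linarith))
  rw [div_lt_div_iff₀ (by linarith) (by linarith)]
  nlinarith

lemma ucoord_Wmap (ha : a ∈ Set.Ioo (-1:ℝ) 1) {x : ℝ} (hx : x ∈ Set.Ioo (-1:ℝ) 1) :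
    ucoord (Wmap a x) = ucoord x + ucoord a := by
  have hd := denom_pos ha hx
  obtain ⟨h1, h2⟩ := ha; obtain ⟨h3, h4⟩ := hx
  have h5 : 1 + x * a ≠ 0 := hd.ne'
  have h6 : (1:ℝ) - x ≠ 0 := by linarith
  have h7 : (1:ℝ) - a ≠ 0 := by linarith
  have key : (1 + Wmap a x) / (1 - Wmap a x) = ((1 + x) / (1 - x)) * ((1 + a) / (1 - a)) := by
    have hnum : 1 + (x + a) / (1 + x * a) = ((1 + x) * (1 + a)) / (1 + x * a) := by
      field_simp; ring
    have hden : 1 - (x + a) / (1 + x * a) = ((1 - x) * (1 - a)) / (1 + x * a) := by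
      field_simp; ring
    rw [Wmap, hnum, hden]; field_simp
  rw [ucoord, key, Real.log_mul, ucoord, ucoord]
  · exact (div_pos (by linarith) (by linarith)).ne'
  · exact (div_pos (by linarith) (by linarith)).ne'

end Waux

/-- If `Ω ∈ RS(M)` and for some `a ∈ (−1,1)`, `a ≠ 0`, one has
`Ω((z + a)/(1 + za)) = Ω(z)` for all `z ∈ Z`, then `Ω` is constant on `Z`; i.e. the only
fixed points of the transformation `Ω(z) ↦ Ω((z + a)/(1 + za))` are constant functions. -/
theorem fixed_points_of_mobius_composition (Ω : ℂ → (M →L[ℂ] M)) (hRS : IsRS Ω)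
    (a : ℝ) (ha : a ∈ Set.Ioo (-1 : ℝ) 1) (ha0 : a ≠ 0)
    (hfix : ∀ z ∈ Zdom, Ω ((z + (a : ℂ)) / (1 + z * (a : ℂ))) = Ω z) :
    ∀ z ∈ Zdom, ∀ w ∈ Zdom, Ω z = Ω w := by
  obtain ⟨hdiff, hsym, hnev, _⟩ := hRS
  suffices key : ∀ f : M, ∀ z ∈ Zdom, (inner ℂ f (Ω z f) : ℂ) = inner ℂ f (Ω (0:ℂ) f) by
    intro z hz w hw
    have h : ∀ x : M,
        (inner ℂ ((Ω z : M →ₗ[ℂ] M) x) x : ℂ) = inner ℂ ((Ω w : M →ₗ[ℂ] M) x) x := by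
      intro x
      have h1 : (inner ℂ x (Ω z x) : ℂ) = inner ℂ x (Ω w x) :=
        (key x z hz).trans (key x w hw).symm
      simp only [ContinuousLinearMap.coe_coe]
      rw [← inner_conj_symm (Ω z x) x, ← inner_conj_symm (Ω w x) x, h1]
    exact ContinuousLinearMap.coe_injective ((ext_inner_map _ _).mp h)
  intro f
  set φ : ℂ → ℂ := fun z => (inner ℂ f (Ω z f) : ℂ) with hφdef
  set g : ℝ → ℝ := fun t => (φ (t : ℂ)).re with hgdef
  have hIoo : ∀ x : ℝ, x ∈ Set.Ioo (-1:ℝ) 1 → (x : ℂ) ∈ Zdom :=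
    fun x hx => ofReal_mem_Zdom hx.1 hx.2
  -- differentiability of φ
  have hφdiff : DifferentiableOn ℂ φ Zdom := by
    have h1 : DifferentiableOn ℂ (fun z => (Ω z) f) Zdom :=
      hdiff.clm_apply (differentiableOn_const f)
    exact (innerSL ℂ f).differentiable.comp_differentiableOn h1
  -- φ is real on (-1,1)
  have him0 : ∀ x : ℝ, x ∈ Set.Ioo (-1:ℝ) 1 → (φ (x:ℂ)).im = 0 := by
    intro x hx
    have hadj := hsym (x:ℂ) (hIoo x hx)
    rw [Complex.conj_ofReal] at hadj
    have hre : φ (x:ℂ) = conj (φ (x:ℂ)) := by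
      calc φ (x:ℂ) = inner ℂ f (Ω (x:ℂ) f) := rfl
        _ = inner ℂ f ((ContinuousLinearMap.adjoint (Ω (x:ℂ))) f) := by rw [← hadj]
        _ = inner ℂ ((Ω (x:ℂ)) f) f := ContinuousLinearMap.adjoint_inner_right _ _ _
        _ = conj (inner ℂ f ((Ω (x:ℂ)) f)) := (inner_conj_symm _ _).symm
        _ = conj (φ (x:ℂ)) := rfl
    exact Complex.conj_eq_iff_im.mp hre.symm
  have hφg : ∀ x : ℝ, x ∈ Set.Ioo (-1:ℝ) 1 → φ (x:ℂ) = ((g x : ℝ) : ℂ) := by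
    intro x hx
    refine Complex.ext ?_ ?_
    · simp [hgdef]
    · simp [him0 x hx]
  -- derivative of g is nonnegative on (-1,1)
  have hder : ∀ x : ℝ, x ∈ Set.Ioo (-1:ℝ) 1 →
      HasDerivAt g ((deriv φ (x:ℂ)).re) x ∧ 0 ≤ (deriv φ (x:ℂ)).re := by
    intro x hx
    have hzx : (x:ℂ) ∈ Zdom := hIoo x hx
    have hd : DifferentiableAt ℂ φ (x:ℂ) :=
      hφdiff.differentiableAt (zdom_isOpen.mem_nhds hzx)
    have hc : HasDerivAt φ (deriv φ (x:ℂ)) (x:ℂ) := hd.hasDerivAt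
    refine ⟨hc.real_of_complex, ?_⟩
    have hslope := hasDerivAt_iff_tendsto_slope.mp hc
    have hmap : Filter.Tendsto (fun ε : ℝ => (x:ℂ) + ε * Complex.I)
        (nhdsWithin 0 (Set.Ioi 0)) (nhdsWithin (x:ℂ) {(x:ℂ)}ᶜ) := by
      rw [tendsto_nhdsWithin_iff]
      constructor
      · have hcont : Continuous (fun ε : ℝ => (x:ℂ) + ε * Complex.I) :=
          continuous_const.add (Complex.continuous_ofReal.mul continuous_const)
        have h0 := hcont.tendsto 0
        simp only [Complex.ofReal_zero, zero_mul, add_zero] at h0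
        exact h0.mono_left nhdsWithin_le_nhds
      · filter_upwards [self_mem_nhdsWithin] with ε hε
        simp only [Set.mem_compl_iff, Set.mem_singleton_iff]
        intro hbad
        have him' : ((x:ℂ) + ε * Complex.I).im = (x:ℂ).im := by rw [hbad]
        simp only [Complex.add_im, Complex.ofReal_im, Complex.mul_im, Complex.ofReal_re,
          Complex.I_im, Complex.I_re, mul_one, mul_zero, add_zero, zero_add] at him'
        exact (ne_of_gt hε) him'
    have T := hslope.comp hmap
    have Tre := (Complex.continuous_re.tendsto _).comp T
    refine ge_of_tendsto Tre ?_
    filter_upwards [self_mem_nhdsWithin] with ε hε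
    have hεpos : (0:ℝ) < ε := hε
    have hbim : ((x:ℂ) + ε * Complex.I).im = ε := by simp
    have hbz : ((x:ℂ) + ε * Complex.I) ∈ Zdom :=
      nonreal_mem_Zdom (by rw [hbim]; exact hεpos.ne')
    have hnev' := hnev _ hbz (by rw [hbim]; exact hεpos.ne') f
    rw [hbim] at hnev'
    have himb : 0 ≤ (φ ((x:ℂ) + ε * Complex.I)).im :=
      nonneg_of_mul_nonneg_right hnev' hεpos
    have hima : (φ (x:ℂ)).im = 0 := him0 x hx
    show 0 ≤ (slope φ (x:ℂ) ((x:ℂ) + ε * Complex.I)).re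
    rw [slope_def_field]
    have hsub : ((x:ℂ) + ε * Complex.I) - (x:ℂ) = (ε:ℂ) * Complex.I := by ring
    rw [hsub, Complex.div_re]
    have h1 : ((ε:ℂ) * Complex.I).re = 0 := by simp
    have h2 : ((ε:ℂ) * Complex.I).im = ε := by simp
    have h3 : Complex.normSq ((ε:ℂ) * Complex.I) = ε * ε := by
      simp [Complex.normSq_apply, h1, h2]
    rw [h1, h2, h3]
    have h4 : (φ ((x:ℂ) + ε * Complex.I) - φ (x:ℂ)).im
        = (φ ((x:ℂ) + ε * Complex.I)).im := by simp [hima]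
    rw [h4]
    have : 0 ≤ (φ ((x:ℂ) + ε * Complex.I)).im * ε / (ε * ε) := by positivity
    simpa using this
  -- g is monotone on (-1,1)
  have hgmono : MonotoneOn g (Set.Ioo (-1:ℝ) 1) := by
    apply monotoneOn_of_deriv_nonneg (convex_Ioo _ _)
    · intro x hx
      exact ((hder x hx).1.continuousAt).continuousWithinAt
    · rw [interior_Ioo]
      intro x hx
      exact ((hder x hx).1.differentiableAt).differentiableWithinAt
    · rw [interior_Ioo]
      intro x hx
      rw [(hder x hx).1.deriv]
      exact (hder x hx).2
  -- invariance of g under Wmap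
  have hstep : ∀ y : ℝ, y ∈ Set.Ioo (-1:ℝ) 1 → g (Wmap a y) = g y := by
    intro y hy
    have hz : (y:ℂ) ∈ Zdom := hIoo y hy
    have hfx := hfix (y:ℂ) hz
    have hcast : ((Wmap a y : ℝ) : ℂ) = ((y:ℂ) + (a:ℂ)) / (1 + (y:ℂ) * (a:ℂ)) := by
      rw [Wmap]; push_cast; ring
    show (φ ((Wmap a y : ℝ) : ℂ)).re = (φ (y:ℂ)).re
    rw [hcast]
    simp only [hφdef]
    rw [hfx]
  -- orbit facts
  have horb : ∀ x : ℝ, x ∈ Set.Ioo (-1:ℝ) 1 → ∀ n : ℕ,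
      (Wmap a)^[n] x ∈ Set.Ioo (-1:ℝ) 1 ∧
      ucoord ((Wmap a)^[n] x) = ucoord x + n * ucoord a ∧
      g ((Wmap a)^[n] x) = g x := by
    intro x hx n
    induction n with
    | zero => simpa using hx
    | succ n ih =>
      obtain ⟨hmem, hu, hg⟩ := ih
      rw [Function.iterate_succ_apply']
      refine ⟨Wmap_mem ha hmem, ?_, ?_⟩
      · rw [ucoord_Wmap ha hmem, hu]; push_cast; ring
      · rw [hstep _ hmem, hg]
  -- constancy of g
  have hgconst : ∀ x ∈ Set.Ioo (-1:ℝ) 1, ∀ y ∈ Set.Ioo (-1:ℝ) 1, g x = g y := by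
    obtain ⟨ha1, ha2⟩ := ha
    rcases lt_or_gt_of_ne ha0 with haneg | hapos
    · -- a < 0 : ucoord a < 0, orbits decrease to -1
      have hta : ucoord a < 0 := by
        apply Real.log_neg (div_pos (by linarith) (by linarith))
        rw [div_lt_one (by linarith)]; linarith
      have claim : ∀ x ∈ Set.Ioo (-1:ℝ) 1, ∀ y ∈ Set.Ioo (-1:ℝ) 1, g x ≤ g y := by
        intro x hx y hy
        obtain ⟨n, hn⟩ := exists_nat_ge ((ucoord y - ucoord x) / ucoord a)
        have hmem := (horb x hx n).1
        have hu := (horb x hx n).2.1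
        have hle : ucoord ((Wmap a)^[n] x) ≤ ucoord y := by
          rw [hu]
          rw [div_le_iff_of_neg hta] at hn
          linarith
        have hyx : (Wmap a)^[n] x ≤ y := by
          by_contra hlt
          push_neg at hlt
          exact absurd (ucoord_strictMono hy hmem hlt) (not_lt.mpr hle)
        calc g x = g ((Wmap a)^[n] x) := ((horb x hx n).2.2).symm
          _ ≤ g y := hgmono hmem hy hyx
      intro x hx y hy
      exact le_antisymm (claim x hx y hy) (claim y hy x hx)
    · -- a > 0 : ucoord a > 0, orbits increase to 1
      have hta : 0 < ucoord a := by
        apply Real.log_pos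
        rw [lt_div_iff₀ (by linarith)]; linarith
      have claim : ∀ x ∈ Set.Ioo (-1:ℝ) 1, ∀ y ∈ Set.Ioo (-1:ℝ) 1, g y ≤ g x := by
        intro x hx y hy
        obtain ⟨n, hn⟩ := exists_nat_ge ((ucoord y - ucoord x) / ucoord a)
        have hmem := (horb x hx n).1
        have hu := (horb x hx n).2.1
        have hle : ucoord y ≤ ucoord ((Wmap a)^[n] x) := by
          rw [hu]
          rw [div_le_iff₀ hta] at hn
          linarith
        have hyx : y ≤ (Wmap a)^[n] x := by
          by_contra hlt
          push_neg at hlt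
          exact absurd (ucoord_strictMono hmem hy hlt) (not_lt.mpr hle)
        calc g y ≤ g ((Wmap a)^[n] x) := hgmono hy hmem hyx
          _ = g x := (horb x hx n).2.2
      intro x hx y hy
      exact le_antisymm (claim y hy x hx) (claim x hx y hy)
  -- identity theorem
  have h0Ioo : (0:ℝ) ∈ Set.Ioo (-1:ℝ) 1 := by norm_num
  have h0Z : (0:ℂ) ∈ Zdom := by
    have := hIoo 0 h0Ioo
    simpa using this
  have hval : ∀ x : ℝ, x ∈ Set.Ioo (-1:ℝ) 1 → φ (x:ℂ) = φ 0 := by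
    intro x hx
    have h1 := hφg x hx
    have h2 := hφg 0 h0Ioo
    rw [Complex.ofReal_zero] at h2
    rw [h1, hgconst x hx 0 h0Ioo, ← h2]
  have hfreq : ∃ᶠ z in nhdsWithin (0:ℂ) {(0:ℂ)}ᶜ, φ z = φ 0 := by
    have hA : Filter.Tendsto (fun n : ℕ => ((n:ℝ) + 2)) Filter.atTop Filter.atTop :=
      Filter.tendsto_atTop_add_const_right _ 2 tendsto_natCast_atTop_atTop
    have h1 : Filter.Tendsto (fun n : ℕ => ((n:ℝ) + 2)⁻¹) Filter.atTop (nhds 0) :=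
      hA.inv_tendsto_atTop
    have hxmem : ∀ n : ℕ, ((n:ℝ) + 2)⁻¹ ∈ Set.Ioo (-1:ℝ) 1 := by
      intro n
      have hpos : (0:ℝ) < (n:ℝ) + 2 := by positivity
      constructor
      · have : (0:ℝ) < ((n:ℝ) + 2)⁻¹ := by positivity
        linarith
      · rw [inv_lt_one_iff₀]
        right
        have : (0:ℝ) ≤ (n:ℝ) := Nat.cast_nonneg n
        linarith
    have hseq : Filter.Tendsto (fun n : ℕ => ((((n:ℝ) + 2)⁻¹ : ℝ) : ℂ)) Filter.atTop
        (nhdsWithin (0:ℂ) {(0:ℂ)}ᶜ) := by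
      rw [tendsto_nhdsWithin_iff]
      constructor
      · have h2 := (Complex.continuous_ofReal.tendsto 0).comp h1
        rw [Complex.ofReal_zero] at h2
        exact h2
      · refine Filter.Eventually.of_forall fun n => ?_
        simp only [Set.mem_compl_iff, Set.mem_singleton_iff]
        exact_mod_cast (ne_of_gt (by positivity : (0:ℝ) < ((n:ℝ)+2)⁻¹))
    exact hseq.frequently (Filter.Frequently.of_forall fun n => hval _ (hxmem n))
  have han : AnalyticOnNhd ℂ φ Zdom := hφdiff.analyticOnNhd zdom_isOpen
  have hEq : Set.EqOn φ (fun _ => φ 0) Zdom :=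
    han.eqOn_of_preconnected_of_frequently_eq analyticOnNhd_const zdom_preconnected h0Z hfreq
  intro z hz
  exact hEq hz
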